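/- arXiv:2311.07214 — 2 statements merged into one kernel-verified Lean document; each statement's English description precedes it below -/
import Mathlib

section
/- Let W be an m×n integer matrix with all entries of absolute value at most Δ such that cone(W) is pointed, and set t = m·(2mΔ + 1)^m. Then for every b ∈ Λ(W) such that b = Wλ for some λ ∈ ℝ^n with λᵢ ≥ t for every coordinate i, one has b ∈ intcone(W). (In other words, the diagonal Frobenius number of W is at most m·(2mΔ + 1)^m.) -/
open Matrix
open Finset

open Finset

/-- Move along a direction `γ` supported on `F` (where `lam` is strictly inside `[0,1]`)
until some coordinate of `F` hits `0` or `1`. -/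
lemma perturb_box {ι : Type*} (F : Finset ι) (lam γ : ι → ℝ)
    (hF : ∀ i ∈ F, 0 < lam i ∧ lam i < 1)
    (hsupp : ∀ i, γ i ≠ 0 → i ∈ F) (hne : ∃ i, γ i ≠ 0) :
    ∃ c : ℝ, (∀ i ∈ F, 0 ≤ lam i + c * γ i ∧ lam i + c * γ i ≤ 1) ∧
      ∃ i₀ ∈ F, lam i₀ + c * γ i₀ = 0 ∨ lam i₀ + c * γ i₀ = 1 := by
  classical
  obtain ⟨i₁, hi₁⟩ := hne
  set D := F.filter (fun i => γ i ≠ 0) with hDdef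
  have hDne : D.Nonempty := ⟨i₁, by simp [hDdef, hi₁, hsupp i₁ hi₁]⟩
  set r : ι → ℝ := fun i => if 0 < γ i then (1 - lam i) / γ i else lam i / (-γ i) with hrdef
  have hrpos : ∀ i ∈ D, 0 < r i := by
    intro i hi
    have hiF : i ∈ F := mem_of_mem_filter i hi
    have hγ : γ i ≠ 0 := (mem_filter.mp hi).2
    rcases lt_or_gt_of_ne hγ with hneg | hpos
    · have : r i = lam i / (-γ i) := by simp [hrdef, not_lt.mpr hneg.le]
      rw [this]
      exact div_pos (hF i hiF).1 (by linarith)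
    · have : r i = (1 - lam i) / γ i := by simp [hrdef, hpos]
      rw [this]
      exact div_pos (by linarith [(hF i hiF).2]) hpos
  set c := D.inf' hDne r with hcdef
  have hcpos : 0 < c := by
    rw [hcdef, Finset.lt_inf'_iff]
    exact hrpos
  have hcle : ∀ i ∈ D, c ≤ r i := fun i hi => Finset.inf'_le r hi
  obtain ⟨i₀, hi₀D, hi₀⟩ := Finset.exists_mem_eq_inf' hDne r
  have hi₀F : i₀ ∈ F := mem_of_mem_filter i₀ hi₀D
  have hγ₀ : γ i₀ ≠ 0 := (mem_filter.mp hi₀D).2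
  refine ⟨c, ?_, i₀, hi₀F, ?_⟩
  · intro i hi
    by_cases hγ : γ i = 0
    · simp [hγ]; constructor <;> linarith [(hF i hi).1, (hF i hi).2]
    · have hiD : i ∈ D := mem_filter.mpr ⟨hi, hγ⟩
      rcases lt_or_gt_of_ne hγ with hneg | hpos
      · have hr : r i = lam i / (-γ i) := by simp [hrdef, not_lt.mpr hneg.le]
        have h1 : c * γ i ≥ r i * γ i := by
          have := hcle i hiD
          nlinarith
        have h2 : r i * γ i = -lam i := by
          rw [hr, div_neg, neg_mul, div_mul_cancel₀ _ hγ]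
        constructor
        · linarith [h1, h2.symm ▸ h1]
        · nlinarith [(hF i hi).2, hcpos]
      · have hr : r i = (1 - lam i) / γ i := by simp [hrdef, hpos]
        have h1 : c * γ i ≤ r i * γ i := by
          have := hcle i hiD
          nlinarith
        have h2 : r i * γ i = 1 - lam i := by
          rw [hr, div_mul_cancel₀ _ hγ]
        constructor
        · nlinarith [(hF i hi).1, hcpos]
        · linarith [h2 ▸ h1]
  · rcases lt_or_gt_of_ne hγ₀ with hneg | hpos
    · left
      have hr : r i₀ = lam i₀ / (-γ i₀) := by simp [hrdef, not_lt.mpr hneg.le]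
      have : c * γ i₀ = -lam i₀ := by
        rw [hcdef, hi₀, hr, div_neg, neg_mul, div_mul_cancel₀ _ hγ₀]
      linarith
    · right
      have hr : r i₀ = (1 - lam i₀) / γ i₀ := by simp [hrdef, hpos]
      have : c * γ i₀ = 1 - lam i₀ := by
        rw [hcdef, hi₀, hr, div_mul_cancel₀ _ hγ₀]
      linarith


open Finset

lemma abs_list_sum_le {α : Type*} (l : List α) (f : α → ℝ) (C : ℝ)
    (h : ∀ p ∈ l, |f p| ≤ C) : |(l.map f).sum| ≤ l.length * C := by
  induction l with
  | nil => simp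
  | cons a l ih =>
    have h1 : |f a| ≤ C := h a (by simp)
    have h2 : |(l.map f).sum| ≤ l.length * C := ih (fun p hp => h p (by simp [hp]))
    simp only [List.map_cons, List.sum_cons, List.length_cons]
    calc |f a + (l.map f).sum| ≤ |f a| + |(l.map f).sum| := abs_add_le _ _
    _ ≤ C + l.length * C := by linarith
    _ = (l.length + 1) * C := by ring
    _ = ((l.length + 1 : ℕ) : ℝ) * C := by push_cast; ring

lemma exists_zero_coord {ι : Type*} [DecidableEq ι] {d : ℕ} (v : ι → Fin d → ℝ)
    (A : Finset ι)
    (h : ∃ lam : ι → ℝ, (∀ i ∈ A, 0 ≤ lam i ∧ lam i ≤ 1) ∧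
      (∑ i ∈ A, lam i = (A.card : ℝ) - 1 - d) ∧ (∀ j, ∑ i ∈ A, lam i * v i j = 0)) :
    ∃ lam : ι → ℝ, (∀ i ∈ A, 0 ≤ lam i ∧ lam i ≤ 1) ∧
      (∑ i ∈ A, lam i = (A.card : ℝ) - 1 - d) ∧ (∀ j, ∑ i ∈ A, lam i * v i j = 0) ∧
      ∃ j ∈ A, lam j = 0 := by
  classical
  obtain ⟨lam0, hb0, hs0, hk0⟩ := h
  suffices H : ∀ (k : ℕ) (lam : ι → ℝ), (∀ i ∈ A, 0 ≤ lam i ∧ lam i ≤ 1) →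
      (∑ i ∈ A, lam i = (A.card : ℝ) - 1 - d) → (∀ j, ∑ i ∈ A, lam i * v i j = 0) →
      (A.filter (fun i => lam i ≠ 0 ∧ lam i ≠ 1)).card = k →
      ∃ lam : ι → ℝ, (∀ i ∈ A, 0 ≤ lam i ∧ lam i ≤ 1) ∧
        (∑ i ∈ A, lam i = (A.card : ℝ) - 1 - d) ∧ (∀ j, ∑ i ∈ A, lam i * v i j = 0) ∧
        ∃ j ∈ A, lam j = 0 by
    exact H _ lam0 hb0 hs0 hk0 rfl
  intro k
  induction k using Nat.strong_induction_on with
  | _ k IH =>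
    intro lam hb hs hk hcard
    by_cases hz : ∃ j ∈ A, lam j = 0
    · exact ⟨lam, hb, hs, hk, hz⟩
    push_neg at hz
    set F := A.filter (fun i => lam i ≠ 0 ∧ lam i ≠ 1) with hFdef
    have hFsub : F ⊆ A := filter_subset _ _
    have hFopen : ∀ i ∈ F, 0 < lam i ∧ lam i < 1 := by
      intro i hi
      obtain ⟨hiA, h01⟩ := mem_filter.mp hi
      exact ⟨lt_of_le_of_ne (hb i hiA).1 (Ne.symm h01.1),
             lt_of_le_of_ne (hb i hiA).2 h01.2⟩
    have hones : ∀ i ∈ A, i ∉ F → lam i = 1 := by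
      intro i hiA hiF
      by_contra h1
      exact hiF (mem_filter.mpr ⟨hiA, hz i hiA, h1⟩)
    -- F has at least d+2 elements
    have hcardF : d + 2 ≤ F.card := by
      by_contra hlt
      push_neg at hlt
      have hsd : ∑ i ∈ A \ F, lam i + ∑ i ∈ F, lam i = ∑ i ∈ A, lam i :=
        Finset.sum_sdiff hFsub
      have hsd1 : ∑ i ∈ A \ F, lam i = ((A.card - F.card : ℕ) : ℝ) := by
        rw [Finset.sum_congr rfl (fun i hi => hones i (Finset.mem_sdiff.mp hi).1
          (Finset.mem_sdiff.mp hi).2)]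
        simp [Finset.card_sdiff_of_subset hFsub]
      have hFcardle : (F.card : ℝ) ≤ d + 1 := by
        have : F.card ≤ d + 1 := by omega
        exact_mod_cast this
      have hcast : ((A.card - F.card : ℕ) : ℝ) = (A.card : ℝ) - F.card := by
        have : F.card ≤ A.card := card_le_card hFsub
        push_cast [this]
        ring
      have hFsum : ∑ i ∈ F, lam i = (F.card : ℝ) - 1 - d := by
        rw [hsd1, hcast] at hsd
        linarith [hsd, hs]
      rcases F.eq_empty_or_nonempty with hFe | hFne
      · rw [hFe] at hFsum
        simp at hFsum
        have : (0:ℝ) ≤ d := Nat.cast_nonneg d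
        linarith
      · have hpos : 0 < ∑ i ∈ F, lam i :=
          Finset.sum_pos (fun i hi => (hFopen i hi).1) hFne
        linarith
    -- linear dependency among the (v i, 1), i ∈ F
    set φ : ι → (Fin (d+1) → ℝ) := fun i => Fin.cons 1 (v i) with hφdef
    have hnli : ¬ LinearIndependent ℝ (fun i : {x // x ∈ F} => φ (i : ι)) := by
      intro hli
      have hle := hli.fintype_card_le_finrank
      simp only [Module.finrank_pi, Fintype.card_fin, Fintype.card_coe] at hle
      omega
    obtain ⟨g, hg0, i₂, hgne⟩ := Fintype.not_linearIndependent_iff.mp hnli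
    set γ : ι → ℝ := fun i => if h : i ∈ F then g ⟨i, h⟩ else 0 with hγdef
    have hγsupp : ∀ i, γ i ≠ 0 → i ∈ F := by
      intro i hne
      by_contra hiF
      simp [hγdef, hiF] at hne
    have hγvals : ∀ (ψ : ι → ℝ), ∑ i ∈ F, γ i * ψ i = ∑ i : {x // x ∈ F}, g i * ψ i := by
      intro ψ
      rw [← Finset.sum_attach F (fun i => γ i * ψ i)]
      apply Finset.sum_congr rfl
      intro i _
      simp [hγdef, i.2]
    have hcomp : ∀ j : Fin (d+1), ∑ i : {x // x ∈ F}, g i * φ (i : ι) j = 0 := by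
      intro j
      have := congrFun hg0 j
      simpa [Finset.sum_apply] using this
    have hγsum : ∑ i ∈ F, γ i = 0 := by
      have h1 := hγvals (fun _ => 1)
      simp only [mul_one] at h1
      have h2 := hcomp 0
      simp only [hφdef, Fin.cons_zero, mul_one] at h2
      rw [h1]
      exact h2
    have hγker : ∀ j : Fin d, ∑ i ∈ F, γ i * v i j = 0 := by
      intro j
      have := hcomp j.succ
      simp only [hφdef, Fin.cons_succ] at this
      rw [hγvals (fun i => v i j)]
      exact this
    have hγne : ∃ i, γ i ≠ 0 := by
      refine ⟨(i₂ : ι), ?_⟩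
      simp [hγdef, i₂.2]
      exact hgne
    -- perturb
    obtain ⟨c, hbnd, i₀, hi₀F, hhit⟩ := perturb_box F lam γ hFopen hγsupp hγne
    set lam' : ι → ℝ := fun i => lam i + c * γ i with hlam'def
    have hoff : ∀ i, i ∉ F → lam' i = lam i := by
      intro i hiF
      have : γ i = 0 := by
        by_contra hne
        exact hiF (hγsupp i hne)
      simp [hlam'def, this]
    have hb' : ∀ i ∈ A, 0 ≤ lam' i ∧ lam' i ≤ 1 := by
      intro i hiA
      by_cases hiF : i ∈ F
      · exact hbnd i hiF
      · rw [hoff i hiF]; exact hb i hiA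
    have hγsumA : ∑ i ∈ A, γ i = 0 := by
      rw [← Finset.sum_subset hFsub (fun x _ hx => by
        by_contra hne
        exact hx (hγsupp x hne))]
      exact hγsum
    have hγkerA : ∀ j, ∑ i ∈ A, γ i * v i j = 0 := by
      intro j
      rw [← Finset.sum_subset hFsub (fun x _ hx => by
        have : γ x = 0 := by
          by_contra hne
          exact hx (hγsupp x hne)
        simp [this])]
      exact hγker j
    have hs' : ∑ i ∈ A, lam' i = (A.card : ℝ) - 1 - d := by
      simp only [hlam'def]
      rw [Finset.sum_add_distrib, ← Finset.mul_sum, hγsumA]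
      simpa using hs
    have hk' : ∀ j, ∑ i ∈ A, lam' i * v i j = 0 := by
      intro j
      simp only [hlam'def]
      have : ∀ i, (lam i + c * γ i) * v i j = lam i * v i j + c * (γ i * v i j) := by
        intro i; ring
      rw [Finset.sum_congr rfl (fun i _ => this i), Finset.sum_add_distrib,
        ← Finset.mul_sum, hγkerA j, hk j]
      simp
    rcases hhit with hzero | hone
    · exact ⟨lam', hb', hs', hk', i₀, hFsub hi₀F, hzero⟩
    · -- fractional count decreased
      have hsubF : A.filter (fun i => lam' i ≠ 0 ∧ lam' i ≠ 1) ⊆ F.erase i₀ := by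
        intro i hi
        obtain ⟨hiA, h01⟩ := mem_filter.mp hi
        have hiF : i ∈ F := by
          by_contra hiF
          rw [hoff i hiF] at h01
          exact h01.2 (hones i hiA hiF)
        refine Finset.mem_erase.mpr ⟨?_, hiF⟩
        intro he
        exact h01.2 (he ▸ hone)
      have hlt : (A.filter (fun i => lam' i ≠ 0 ∧ lam' i ≠ 1)).card < k := by
        calc (A.filter (fun i => lam' i ≠ 0 ∧ lam' i ≠ 1)).card
            ≤ (F.erase i₀).card := card_le_card hsubF
          _ < F.card := by
              rw [Finset.card_erase_of_mem hi₀F]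
              have : 0 < F.card := Finset.card_pos.mpr ⟨i₀, hi₀F⟩
              omega
          _ = k := hcard
      exact IH _ hlt lam' hb' hs' hk' rfl


lemma steinitz_chain {ι : Type*} [DecidableEq ι] {d : ℕ} {C : ℝ} (hC : 0 ≤ C)
    (v : ι → Fin d → ℝ) (hv : ∀ i j, |v i j| ≤ C) :
    ∀ (N : ℕ) (A : Finset ι), A.card = N →
    (d + 1 ≤ A.card → ∃ lam : ι → ℝ, (∀ i ∈ A, 0 ≤ lam i ∧ lam i ≤ 1) ∧
      (∑ i ∈ A, lam i = (A.card : ℝ) - d) ∧ (∀ j, ∑ i ∈ A, lam i * v i j = 0)) →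
    ∃ l : List ι, l.Nodup ∧ l.toFinset = A ∧
      ∀ (k : ℕ) (j : Fin d), |((l.take k).map (fun p => v p j)).sum| ≤ d * C := by
  intro N
  induction N using Nat.strong_induction_on with
  | _ N IHN =>
    intro A hAcard hgood
    by_cases hsmall : A.card ≤ d
    · refine ⟨A.toList, Finset.nodup_toList A, by simp, ?_⟩
      intro k j
      have hlen : A.toList.length = A.card := Finset.length_toList A
      calc |(((A.toList.take k)).map (fun p => v p j)).sum|
          ≤ ((A.toList.take k).length : ℝ) * C := by
            apply abs_list_sum_le
            intro p hp
            exact hv p j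
        _ ≤ (d : ℝ) * C := by
            apply mul_le_mul_of_nonneg_right _ hC
            have h1 : (A.toList.take k).length ≤ A.toList.length := by
              simp [List.length_take]
            have : (A.toList.take k).length ≤ d := by omega
            exact_mod_cast this
    · push_neg at hsmall
      have hA1 : d + 1 ≤ A.card := hsmall
      obtain ⟨lam, hbl, hsl, hkl⟩ := hgood hA1
      -- scaled vector for the sum (card - 1 - d)
      have hden : (0:ℝ) < (A.card : ℝ) - d := by
        have : (d:ℝ) + 1 ≤ (A.card : ℝ) := by exact_mod_cast hA1
        linarith
      set ρ : ℝ := ((A.card : ℝ) - 1 - d) / ((A.card : ℝ) - d) with hρdef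
      have hρ0 : 0 ≤ ρ := by
        apply div_nonneg _ hden.le
        have : (d:ℝ) + 1 ≤ (A.card : ℝ) := by exact_mod_cast hA1
        linarith
      have hρ1 : ρ ≤ 1 := by
        rw [hρdef, div_le_one hden]
        linarith
      have hmu0 : ∃ mu : ι → ℝ, (∀ i ∈ A, 0 ≤ mu i ∧ mu i ≤ 1) ∧
          (∑ i ∈ A, mu i = (A.card : ℝ) - 1 - d) ∧ (∀ j, ∑ i ∈ A, mu i * v i j = 0) := by
        refine ⟨fun i => ρ * lam i, ?_, ?_, ?_⟩
        · intro i hi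
          constructor
          · exact mul_nonneg hρ0 (hbl i hi).1
          · calc ρ * lam i ≤ 1 * 1 :=
                mul_le_mul hρ1 (hbl i hi).2 (hbl i hi).1 zero_le_one
            _ = 1 := by ring
        · rw [← Finset.mul_sum, hsl, hρdef, div_mul_cancel₀ _ hden.ne']
        · intro j
          have : ∀ i, ρ * lam i * v i j = ρ * (lam i * v i j) := fun i => by ring
          rw [Finset.sum_congr rfl (fun i _ => this i), ← Finset.mul_sum, hkl j, mul_zero]
      obtain ⟨mu, hmb, hms, hmk, j₀, hj₀A, hj₀0⟩ := exists_zero_coord v A hmu0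
      -- full-set prefix bound
      have hfull : ∀ jj : Fin d, |∑ i ∈ A, v i jj| ≤ d * C := by
        intro jj
        have hsplit : ∑ i ∈ A, v i jj
            = ∑ i ∈ A, (1 - lam i) * v i jj + ∑ i ∈ A, lam i * v i jj := by
          rw [← Finset.sum_add_distrib]
          apply Finset.sum_congr rfl
          intro i _; ring
        rw [hsplit, hkl jj, add_zero]
        calc |∑ i ∈ A, (1 - lam i) * v i jj|
            ≤ ∑ i ∈ A, |(1 - lam i) * v i jj| := Finset.abs_sum_le_sum_abs _ _
          _ ≤ ∑ i ∈ A, (1 - lam i) * C := by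
              apply Finset.sum_le_sum
              intro i hi
              rw [abs_mul]
              have h1 : 0 ≤ 1 - lam i := by linarith [(hbl i hi).2]
              rw [abs_of_nonneg h1]
              exact mul_le_mul_of_nonneg_left (hv i jj) h1
          _ = ((A.card : ℝ) - ((A.card : ℝ) - d)) * C := by
              rw [← Finset.sum_mul]
              congr 1
              rw [Finset.sum_sub_distrib, hsl]
              simp
          _ = d * C := by ring
      -- recurse on A.erase j₀
      have hcard' : (A.erase j₀).card = N - 1 := by
        rw [Finset.card_erase_of_mem hj₀A, hAcard]
      have h1N : 1 ≤ N := by rw [← hAcard]; omega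
      have hlt : N - 1 < N := by omega
      have hcastcard : ((A.erase j₀).card : ℝ) = (A.card : ℝ) - 1 := by
        rw [Finset.card_erase_of_mem hj₀A]
        have : 1 ≤ A.card := by omega
        push_cast [this]
        ring
      obtain ⟨l', hnd', htf', hpre'⟩ := IHN (N-1) (by omega) (A.erase j₀) hcard' (by
        intro _
        refine ⟨mu, ?_, ?_, ?_⟩
        · intro i hi
          exact hmb i (Finset.mem_of_mem_erase hi)
        · have h := Finset.sum_erase_add A mu hj₀A
          simp only [hj₀0, add_zero] at h
          rw [h, hms, hcastcard]
        · intro j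
          have h := Finset.sum_erase_add A (fun i => mu i * v i j) hj₀A
          simp only [hj₀0, zero_mul, add_zero] at h
          rw [h]
          exact hmk j)
      refine ⟨l' ++ [j₀], ?_, ?_, ?_⟩
      · rw [List.nodup_append']
        refine ⟨hnd', List.nodup_singleton j₀, ?_⟩
        intro a ha hb
        simp at hb
        subst hb
        have : a ∈ l'.toFinset := List.mem_toFinset.mpr ha
        rw [htf'] at this
        exact (Finset.notMem_erase a A) this
      · rw [List.toFinset_append, htf']
        simp only [List.toFinset_cons, List.toFinset_nil, LawfulSingleton.insert_empty_eq]
        rw [Finset.union_comm, ← Finset.insert_eq, Finset.insert_erase hj₀A]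
      · intro k jj
        by_cases hk : k ≤ l'.length
        · rw [List.take_append_of_le_length hk]
          exact hpre' k jj
        · push_neg at hk
          have hk2 : (l' ++ [j₀]).length ≤ k := by
            rw [List.length_append, List.length_singleton]
            omega
          rw [List.take_of_length_le hk2]
          have : ((l' ++ [j₀]).map (fun p => v p jj)).sum = ∑ i ∈ A, v i jj := by
            have hnd : (l' ++ [j₀]).Nodup := by
              rw [List.nodup_append']
              refine ⟨hnd', List.nodup_singleton j₀, ?_⟩
              intro a ha hb
              simp at hb
              subst hb
              have : a ∈ l'.toFinset := List.mem_toFinset.mpr ha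
              rw [htf'] at this
              exact (Finset.notMem_erase a A) this
            rw [← List.sum_toFinset _ hnd]
            apply Finset.sum_congr _ (fun _ _ => rfl)
            rw [List.toFinset_append, htf']
            simp only [List.toFinset_cons, List.toFinset_nil, LawfulSingleton.insert_empty_eq]
            rw [Finset.union_comm, ← Finset.insert_eq, Finset.insert_erase hj₀A]
          rw [this]
          exact hfull jj

lemma steinitz_list {ι : Type*} [DecidableEq ι] [Fintype ι] {d : ℕ} {C : ℝ} (hC : 0 ≤ C)
    (v : ι → Fin d → ℝ) (hv : ∀ i j, |v i j| ≤ C)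
    (hsum : ∀ j, ∑ p, v p j = 0) :
    ∃ l : List ι, l.Nodup ∧ l.toFinset = Finset.univ ∧
      ∀ (k : ℕ) (j : Fin d), |((l.take k).map (fun p => v p j)).sum| ≤ d * C := by
  apply steinitz_chain hC v hv (Finset.univ.card) Finset.univ rfl
  intro hge
  have hpos : (0:ℝ) < (Finset.univ (α := ι)).card := by
    have : 1 ≤ (Finset.univ (α := ι)).card := by omega
    exact_mod_cast this
  refine ⟨fun _ => ((Finset.univ (α := ι)).card - d) / (Finset.univ (α := ι)).card, ?_, ?_, ?_⟩
  · intro i _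
    constructor
    · apply div_nonneg _ hpos.le
      have : (d:ℝ) + 1 ≤ ((Finset.univ (α := ι)).card : ℝ) := by exact_mod_cast hge
      linarith
    · rw [div_le_one hpos]
      have : (0:ℝ) ≤ d := Nat.cast_nonneg d
      linarith
  · rw [Finset.sum_const, nsmul_eq_mul, mul_comm, div_mul_cancel₀ _ hpos.ne']
  · intro j
    have : ∀ i : ι, (((Finset.univ (α := ι)).card : ℝ) - d) / (Finset.univ (α := ι)).card * v i j
        = ((((Finset.univ (α := ι)).card : ℝ) - d) / (Finset.univ (α := ι)).card) * v i j := fun i => rfl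
    rw [← Finset.mul_sum, hsum j, mul_zero]


section Chunk

variable {m n : ℕ} {Δn : ℕ} {W : Matrix (Fin m) (Fin n) ℤ}

open scoped Classical in
lemma exists_chunk (hm : 1 ≤ m) (hW : ∀ j i, |W j i| ≤ (Δn : ℤ)) (w : Fin n → ℝ)
    (hker : ∀ j, ∑ i, (W j i : ℝ) * w i = 0)
    (hfrac : (Finset.univ.filter (fun i : Fin n => ¬∃ z : ℤ, (z : ℝ) = w i)).card ≤ m)
    (hbig : m * (2*m*Δn + 1)^m < ∑ i, ⌈|w i|⌉₊) :
    ∃ κ : Fin n → ℤ, (∀ j, ∑ i, W j i * κ i = 0) ∧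
      (1 ≤ ∑ i, (κ i).natAbs) ∧
      (∀ i, ((κ i).natAbs : ℝ) ≤ |w i| ∧ |w i - κ i| = |w i| - (κ i).natAbs) := by
  classical
  set k : Fin n → ℕ := fun i => ⌈|w i|⌉₊ with hkdef
  set sg : Fin n → ℝ := fun i => if 0 ≤ w i then 1 else -1 with hsgdef
  set sgz : Fin n → ℤ := fun i => if 0 ≤ w i then 1 else -1 with hsgzdef
  set coef : ((i : Fin n) × Fin (k i)) → ℝ :=
    fun p => min (|w p.1|) (p.2 + 1) - min (|w p.1|) p.2 with hcoefdef
  set v : ((i : Fin n) × Fin (k i)) → Fin m → ℝ :=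
    fun p j => sg p.1 * coef p * (W j p.1 : ℝ) with hvdef
  have habs : ∀ i, 0 ≤ |w i| := fun i => abs_nonneg _
  have hsg1 : ∀ i, |sg i| = 1 := by
    intro i; by_cases h : 0 ≤ w i <;> simp [hsgdef, h]
  have hsgw : ∀ i, sg i * |w i| = w i := by
    intro i
    by_cases h : 0 ≤ w i
    · simp [hsgdef, h, abs_of_nonneg h]
    · push_neg at h
      simp [hsgdef, not_le.mpr h, abs_of_neg h]
  have hcoef01 : ∀ p, 0 ≤ coef p ∧ coef p ≤ 1 := by
    intro p
    constructor
    · apply sub_nonneg.mpr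
      apply min_le_min le_rfl
      push_cast; linarith
    · have h1 : min (|w p.1|) ((p.2 : ℝ) + 1) ≤ min (|w p.1|) (p.2 : ℝ) + 1 := by
        have h2 : min (|w p.1|) ((p.2 : ℝ) + 1) ≤ min (|w p.1| + 1) ((p.2 : ℝ) + 1) :=
          min_le_min (by linarith) le_rfl
        rw [min_add_add_right] at h2
        exact h2
      simp only [hcoefdef]
      linarith
  have hcoefsum : ∀ i, ∑ a : Fin (k i), coef ⟨i, a⟩ = |w i| := by
    intro i
    have hc : ∀ a : Fin (k i), coef ⟨i, a⟩ = min (|w i|) ((a:ℝ) + 1) - min (|w i|) ((a:ℝ)) := by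
      intro a; simp [hcoefdef]
    rw [Finset.sum_congr rfl (fun a _ => hc a)]
    rw [Fin.sum_univ_eq_sum_range (fun a : ℕ => min (|w i|) ((a:ℝ) + 1) - min (|w i|) ((a:ℝ)))]
    have hcast : ∀ a ∈ Finset.range (k i), min (|w i|) ((a:ℝ) + 1) - min (|w i|) ((a:ℝ))
        = (fun b : ℕ => min (|w i|) (b:ℝ)) (a+1) - (fun b : ℕ => min (|w i|) (b:ℝ)) a := by
      intro a _
      simp only [Nat.cast_add, Nat.cast_one]
    rw [Finset.sum_congr rfl hcast, Finset.sum_range_sub (fun b : ℕ => min (|w i|) (b:ℝ))]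
    have h0 : min (|w i|) ((0:ℕ):ℝ) = 0 := by
      simp [min_eq_right (habs i)]
    have hk2 : min (|w i|) ((k i : ℕ):ℝ) = |w i| := min_eq_left (Nat.le_ceil (|w i|))
    rw [h0, hk2, sub_zero]
  have hcoefint : ∀ p : ((i : Fin n) × Fin (k i)), ((p.2 : ℝ) + 1 ≤ |w p.1|) → coef p = 1 := by
    intro p hp
    simp only [hcoefdef]
    rw [min_eq_right hp, min_eq_right (by linarith)]
    ring
  have hvbound : ∀ p (j : Fin m), |v p j| ≤ (Δn : ℝ) := by
    intro p j
    simp only [hvdef, abs_mul, hsg1, one_mul]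
    have h1 : |coef p| ≤ 1 := by
      rw [abs_of_nonneg (hcoef01 p).1]; exact (hcoef01 p).2
    have h2 : |(W j p.1 : ℝ)| ≤ (Δn : ℝ) := by
      rw [← Int.cast_abs]
      exact_mod_cast hW j p.1
    calc |coef p| * |(W j p.1 : ℝ)| ≤ 1 * (Δn : ℝ) := by
          apply mul_le_mul h1 h2 (abs_nonneg _) zero_le_one
      _ = (Δn : ℝ) := one_mul _
  have hvsum : ∀ j, ∑ p : ((i : Fin n) × Fin (k i)), v p j = 0 := by
    intro j
    rw [← Finset.univ_sigma_univ, Finset.sum_sigma]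
    have : ∀ i, ∑ a : Fin (k i), v ⟨i, a⟩ j = (W j i : ℝ) * w i := by
      intro i
      simp only [hvdef]
      rw [← Finset.sum_mul, ← Finset.mul_sum]
      rw [hcoefsum i]
      rw [hsgw i]; ring
    rw [Finset.sum_congr rfl (fun i _ => this i)]
    exact hker j
  -- fractional pieces
  set IntP : ((i : Fin n) × Fin (k i)) → Prop := fun p => ((p.2 : ℝ) + 1 ≤ |w p.1|) with hIntPdef
  have hceilgt : ∀ p : ((i : Fin n) × Fin (k i)), (p.2 : ℝ) < |w p.1| := by
    intro p
    by_contra hcon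
    push_neg at hcon
    have : k p.1 ≤ (p.2 : ℕ) := Nat.ceil_le.mpr hcon
    have := p.2.2
    omega
  have hfracmem : ∀ p, ¬ IntP p → ¬∃ z : ℤ, (z:ℝ) = w p.1 := by
    intro p hp hz
    obtain ⟨z, hz⟩ := hz
    apply hp
    have h1 : |w p.1| = ((z.natAbs : ℕ) : ℝ) := by
      rw [← hz, ← Int.cast_abs, Int.abs_eq_natAbs, Int.cast_natCast]
    have h2 : (p.2 : ℕ) < k p.1 := p.2.2
    have h3 : k p.1 = z.natAbs := by
      simp only [hkdef, h1]
      exact Nat.ceil_natCast _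
    simp only [hIntPdef]
    rw [h1]
    have : (p.2 : ℕ) + 1 ≤ z.natAbs := by omega
    exact_mod_cast this
  have hfracinj : ∀ p q, ¬IntP p → ¬IntP q → p.1 = q.1 → p = q := by
    rintro ⟨pi, pa⟩ ⟨qi, qa⟩ hp hq h1
    dsimp at h1
    subst h1
    have hpa := hceilgt ⟨pi, pa⟩
    have hqa := hceilgt ⟨pi, qa⟩
    rw [hIntPdef] at hp hq
    push_neg at hp hq
    dsimp at hp hq hpa hqa
    have : (pa : ℕ) = (qa : ℕ) := by
      have h2 : ((pa:ℕ) : ℝ) < (qa : ℕ) + 1 := by linarith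
      have h3 : ((qa:ℕ) : ℝ) < (pa : ℕ) + 1 := by linarith
      have h2' : (pa:ℕ) < (qa:ℕ) + 1 := by exact_mod_cast h2
      have h3' : (qa:ℕ) < (pa:ℕ) + 1 := by exact_mod_cast h3
      omega
    congr
    exact Fin.ext this
  have hfcard : (Finset.univ.filter (fun p : ((i : Fin n) × Fin (k i)) => ¬ IntP p)).card ≤ m := by
    refine le_trans (Finset.card_le_card_of_injOn (fun p => p.1) ?_ ?_) hfrac
    · intro p hp
      simp only [Finset.coe_filter, Finset.mem_filter, Finset.mem_univ, true_and, Set.mem_setOf_eq] at hp ⊢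
      exact hfracmem p hp
    · intro p hp q hq h1
      simp only [Finset.coe_filter, Finset.mem_univ, true_and, Set.mem_setOf_eq] at hp hq
      exact hfracinj p q hp hq h1
  -- Steinitz
  obtain ⟨l, hnd, htf, hpre⟩ := steinitz_list (d := m) (C := (Δn:ℝ)) (Nat.cast_nonneg Δn) v hvbound hvsum
  set N := l.length with hNdef
  have hNcard : N = ∑ i, k i := by
    rw [hNdef, ← List.toFinset_card_of_nodup hnd, htf, Finset.card_univ, Fintype.card_sigma]
    simp
  set P : ℕ → Fin m → ℝ := fun q j => ((l.take q).map (fun p => v p j)).sum with hPdef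
  have hPbound : ∀ q (j : Fin m), |P q j| ≤ (m : ℝ) * Δn := fun q j => hpre q j
  set cnt : ℕ → ℕ := fun q => (((l.take q).toFinset).filter (fun p => ¬ IntP p)).card with hcntdef
  have hcnttake : ∀ q, (l.take q).Nodup := fun q => (List.take_sublist _ _).nodup hnd
  have hcntmono : ∀ q q', q ≤ q' → cnt q ≤ cnt q' := by
    intro q q' hqq
    apply Finset.card_le_card
    apply Finset.filter_subset_filter
    intro p hp
    rw [List.mem_toFinset] at hp ⊢
    have heq : l.take q = (l.take q').take q := by
      rw [List.take_take, min_eq_left hqq]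
    rw [heq] at hp
    exact List.take_subset _ _ hp
  have hcntN : ∀ q, cnt q ≤ cnt N := by
    intro q
    by_cases hq : q ≤ N
    · exact hcntmono q N hq
    · have : l.take q = l.take N := by
        rw [List.take_of_length_le (by omega), List.take_of_length_le (le_refl _)]
      simp only [hcntdef, this]
      exact le_refl _
  have hfleq : cnt N ≤ m := by
    have : l.take N = l := List.take_of_length_le (le_refl _)
    simp only [hcntdef, this, htf]
    exact hfcard
  -- integrality of sums of integral pieces
  have hvint : ∀ p (j : Fin m), IntP p → v p j = ((sgz p.1 * W j p.1 : ℤ) : ℝ) := by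
    intro p j hp
    rw [hvdef]
    dsimp only
    rw [hcoefint p hp]
    push_cast
    rw [mul_one]
    congr 1
    by_cases h : 0 ≤ w p.1 <;> simp [hsgdef, hsgzdef, h]
  have hintsum : ∀ (T : Finset ((i : Fin n) × Fin (k i))), (∀ p ∈ T, IntP p) →
      ∀ j, ∃ z : ℤ, (z:ℝ) = ∑ p ∈ T, v p j := by
    intro T hT j
    refine ⟨∑ p ∈ T, sgz p.1 * W j p.1, ?_⟩
    rw [Int.cast_sum]
    exact Finset.sum_congr rfl (fun p hp => (hvint p j (hT p hp)).symm)
  -- pigeonhole setup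
  set K2 : ℕ := 2*m*Δn with hK2def
  have hgb : ∀ q (j : Fin m), (⌈P q j + ((m*Δn : ℕ):ℝ)⌉).toNat < K2 + 1 := by
    intro q j
    have h := hPbound q j
    rw [abs_le] at h
    have h1 : ⌈P q j + ((m*Δn:ℕ):ℝ)⌉ ≤ (K2:ℤ) := by
      apply Int.ceil_le.mpr
      rw [hK2def]
      push_cast
      linarith [h.2]
    omega
  set g : ℕ → Fin m → Fin (K2+1) := fun q j => ⟨(⌈P q j + ((m*Δn : ℕ):ℝ)⌉).toNat, hgb q j⟩ with hgdef
  set Φ : ℕ → ℕ × (Fin m → Fin (K2+1)) := fun q => (if cnt q = cnt N then 0 else cnt q, g q) with hΦdef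
  have hmaps : ∀ q ∈ Finset.range N, Φ q ∈ (Finset.range m) ×ˢ (Finset.univ : Finset (Fin m → Fin (K2+1))) := by
    intro q _
    rw [Finset.mem_product]
    refine ⟨?_, Finset.mem_univ _⟩
    rw [Finset.mem_range, hΦdef]
    dsimp only
    split_ifs with h
    · omega
    · have h1 := hcntN q
      have h2 := hfleq
      omega
  have hcardlt : ((Finset.range m) ×ˢ (Finset.univ : Finset (Fin m → Fin (K2+1)))).card < (Finset.range N).card := by
    rw [Finset.card_product, Finset.card_range, Finset.card_range, Finset.card_univ,
      Fintype.card_fun, Fintype.card_fin, Fintype.card_fin]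
    rw [hNcard]
    calc m * (K2+1)^m = m * (2*m*Δn + 1)^m := by rw [hK2def]
    _ < ∑ i, k i := hbig
  obtain ⟨q1, hq1, q2, hq2, hqne, hΦeq⟩ := Finset.exists_ne_map_eq_of_card_lt_of_maps_to hcardlt hmaps
  -- wlog q1 < q2
  have hc0 : ∀ q (j : Fin m), 0 ≤ ⌈P q j + ((m*Δn:ℕ):ℝ)⌉ := by
    intro q j
    apply Int.ceil_nonneg
    have h := (abs_le.mp (hPbound q j)).1
    push_cast
    linarith
  have hmain : ∀ a b, a ∈ Finset.range N → b ∈ Finset.range N → a < b → Φ a = Φ b →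
      ∃ T : Finset ((i : Fin n) × Fin (k i)), T.Nonempty ∧ (∀ p ∈ T, IntP p) ∧
        (∀ j, ∑ p ∈ T, v p j = 0) := by
    intro a b ha hb hab hΦab
    rw [Finset.mem_range] at ha hb
    have hΦ1 := congrArg Prod.fst hΦab
    have hΦ2 := congrArg Prod.snd hΦab
    simp only [hΦdef] at hΦ1 hΦ2
    have hgeq : ∀ j, ⌈P a j + ((m*Δn:ℕ):ℝ)⌉ = ⌈P b j + ((m*Δn:ℕ):ℝ)⌉ := by
      intro j
      have h1 := congrFun hΦ2 j
      simp only [hgdef] at h1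
      have h2 := congrArg Fin.val h1
      simp only at h2
      have h3 := hc0 a j
      have h4 := hc0 b j
      omega
    have hPeq : ∀ (z : ℤ) (j : Fin m), P b j - P a j = (z:ℝ) → P a j = P b j := by
      intro z j hzj
      have h1 : P b j + ((m*Δn:ℕ):ℝ) = P a j + ((m*Δn:ℕ):ℝ) + (z:ℝ) := by linarith
      have h2 := hgeq j
      rw [h1, Int.ceil_add_intCast] at h2
      have hz0 : z = 0 := by omega
      rw [hz0] at hzj
      push_cast at hzj
      linarith
    by_cases hcnteq : cnt a = cnt b
    · -- interval chunk
      set M := (l.drop a).take (b - a) with hMdef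
      have hsplit : l.take b = l.take a ++ M := by
        rw [hMdef, ← List.take_add]
        congr 1
        omega
      have hndb : (l.take b).Nodup := hcnttake b
      have hndb2 := hndb
      rw [hsplit, List.nodup_append'] at hndb2
      have hndM : M.Nodup := hndb2.2.1
      have htfs : (l.take b).toFinset = (l.take a).toFinset ∪ M.toFinset := by
        rw [hsplit, List.toFinset_append]
      have hdisjF : Disjoint (l.take a).toFinset M.toFinset := by
        rw [List.disjoint_toFinset_iff_disjoint]
        exact hndb2.2.2
      have hcntsplit : cnt b = cnt a + (M.toFinset.filter (fun p => ¬ IntP p)).card := by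
        simp only [hcntdef, htfs, Finset.filter_union]
        exact Finset.card_union_of_disjoint (Finset.disjoint_filter_filter hdisjF)
      have hMint : ∀ p ∈ M.toFinset, IntP p := by
        intro p hp
        by_contra hpc
        have h1 : 0 < (M.toFinset.filter (fun p => ¬ IntP p)).card :=
          Finset.card_pos.mpr ⟨p, Finset.mem_filter.mpr ⟨hp, hpc⟩⟩
        omega
      have hMsum : ∀ j, ∑ p ∈ M.toFinset, v p j = P b j - P a j := by
        intro j
        rw [List.sum_toFinset _ hndM]
        have h1 : P b j = P a j + (M.map (fun p => v p j)).sum := by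
          simp only [hPdef]
          rw [hsplit, List.map_append, List.sum_append]
        linarith
      have hPab : ∀ j, P a j = P b j := by
        intro j
        obtain ⟨z, hz⟩ := hintsum M.toFinset hMint j
        exact hPeq z j (by rw [← hMsum j, ← hz])
      refine ⟨M.toFinset, ?_, hMint, ?_⟩
      · have hlen : M.length = min (b - a) (N - a) := by
          simp [hMdef, List.length_take, List.length_drop, hNdef]
        have hlen1 : 0 < M.length := by
          rw [hlen]
          omega
        obtain ⟨p, hp⟩ := List.exists_mem_of_ne_nil M (List.ne_nil_of_length_pos hlen1)
        exact ⟨p, List.mem_toFinset.mpr hp⟩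
      · intro j
        rw [hMsum j, hPab j]
        ring
    · -- complement chunk
      have hmono' : cnt a ≤ cnt b := hcntmono a b (le_of_lt hab)
      have hfstcase : cnt a = 0 ∧ cnt b = cnt N := by
        split_ifs at hΦ1 <;> omega
      have hlsplit : l = l.take b ++ l.drop b := (List.take_append_drop b l).symm
      have hndl2 := hnd
      rw [hlsplit, List.nodup_append'] at hndl2
      have hndM2 : (l.drop b).Nodup := hndl2.2.1
      have hndM1 : (l.take a).Nodup := hcnttake a
      have hdisjb : Disjoint (l.take b).toFinset (l.drop b).toFinset := by
        rw [List.disjoint_toFinset_iff_disjoint]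
        exact hndl2.2.2
      have hdisj12 : Disjoint (l.take a).toFinset (l.drop b).toFinset := by
        apply Finset.disjoint_of_subset_left _ hdisjb
        intro p hp
        rw [List.mem_toFinset] at hp ⊢
        have heq : l.take a = (l.take b).take a := by
          rw [List.take_take, min_eq_left (le_of_lt hab)]
        rw [heq] at hp
        exact List.take_subset _ _ hp
      have htfsb : (l.take N).toFinset = (l.take b).toFinset ∪ (l.drop b).toFinset := by
        rw [List.take_of_length_le (le_refl N), ← List.toFinset_append, ← hlsplit]
      have hcntNsplit : cnt N = cnt b + ((l.drop b).toFinset.filter (fun p => ¬ IntP p)).card := by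
        simp only [hcntdef, htfsb, Finset.filter_union]
        exact Finset.card_union_of_disjoint (Finset.disjoint_filter_filter hdisjb)
      have hM1int : ∀ p ∈ (l.take a).toFinset, IntP p := by
        intro p hp
        by_contra hpc
        have h1 : 0 < cnt a :=
          Finset.card_pos.mpr ⟨p, Finset.mem_filter.mpr ⟨hp, hpc⟩⟩
        omega
      have hM2int : ∀ p ∈ (l.drop b).toFinset, IntP p := by
        intro p hp
        by_contra hpc
        have h1 : 0 < ((l.drop b).toFinset.filter (fun p => ¬ IntP p)).card :=
          Finset.card_pos.mpr ⟨p, Finset.mem_filter.mpr ⟨hp, hpc⟩⟩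
        omega
      have hTint2 : ∀ p ∈ (l.take a).toFinset ∪ (l.drop b).toFinset, IntP p := by
        intro p hp
        rcases Finset.mem_union.mp hp with h | h
        · exact hM1int p h
        · exact hM2int p h
      have htot : ∀ j, (l.map (fun p => v p j)).sum = 0 := by
        intro j
        rw [← List.sum_toFinset _ hnd, htf]
        exact hvsum j
      have hM2sum : ∀ j, ∑ p ∈ (l.drop b).toFinset, v p j = - P b j := by
        intro j
        rw [List.sum_toFinset _ hndM2]
        have h1 := htot j
        have h2 : (l.map (fun p => v p j)).sum
            = ((l.take b).map (fun p => v p j)).sum + ((l.drop b).map (fun p => v p j)).sum := by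
          conv_lhs => rw [hlsplit]
          rw [List.map_append, List.sum_append]
        have h3 : P b j = ((l.take b).map (fun p => v p j)).sum := rfl
        rw [h2, ← h3] at h1
        linarith
      have hTsum2 : ∀ j, ∑ p ∈ (l.take a).toFinset ∪ (l.drop b).toFinset, v p j
          = P a j - P b j := by
        intro j
        rw [Finset.sum_union hdisj12, hM2sum j, List.sum_toFinset _ hndM1]
        have : P a j = ((l.take a).map (fun p => v p j)).sum := rfl
        rw [← this]
        ring
      have hPab : ∀ j, P a j = P b j := by
        intro j
        obtain ⟨z, hz⟩ := hintsum _ hTint2 j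
        rw [hTsum2 j] at hz
        refine hPeq (-z) j ?_
        push_cast
        linarith
      refine ⟨(l.take a).toFinset ∪ (l.drop b).toFinset, ?_, hTint2, ?_⟩
      · have hlen2 : 0 < (l.drop b).length := by
          rw [List.length_drop]
          omega
        obtain ⟨p, hp⟩ := List.exists_mem_of_ne_nil _ (List.ne_nil_of_length_pos hlen2)
        exact ⟨p, Finset.mem_union_right _ (List.mem_toFinset.mpr hp)⟩
      · intro j
        rw [hTsum2 j, hPab j]
        ring
  have hT : ∃ T : Finset ((i : Fin n) × Fin (k i)), T.Nonempty ∧ (∀ p ∈ T, IntP p) ∧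
      (∀ j, ∑ p ∈ T, v p j = 0) := by
    rcases lt_or_gt_of_ne hqne with h | h
    · exact hmain q1 q2 hq1 hq2 h hΦeq
    · exact hmain q2 q1 hq2 hq1 h hΦeq.symm
  obtain ⟨T, hTne, hTint, hTsum⟩ := hT
  -- the chunk
  set κ : Fin n → ℤ := fun i => sgz i * ((T.filter (fun p => p.1 = i)).card : ℤ) with hκdef
  have hsgz1 : ∀ i, (sgz i).natAbs = 1 := by
    intro i
    by_cases h : 0 ≤ w i <;> simp [hsgzdef, h]
  have hκabs : ∀ i, (κ i).natAbs = (T.filter (fun p => p.1 = i)).card := by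
    intro i
    rw [hκdef]
    dsimp only
    rw [Int.natAbs_mul, hsgz1, Int.natAbs_natCast, one_mul]
  have hfib : ∀ i, (T.filter (fun p => p.1 = i)).card ≤ ⌊|w i|⌋₊ := by
    intro i
    have h := Finset.card_le_card_of_injOn (f := fun p => (p.2 : ℕ))
      (s := T.filter (fun p => p.1 = i)) (t := Finset.range ⌊|w i|⌋₊) ?_ ?_
    · simpa using h
    · intro p hp
      rw [Finset.mem_coe, Finset.mem_filter] at hp
      have hint := hTint p hp.1
      simp only [hIntPdef] at hint
      simp only [Finset.mem_coe, Finset.mem_range]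
      have h1 : ((p.2:ℕ):ℝ) + 1 ≤ |w i| := by rw [← hp.2]; exact hint
      have h2 : (((p.2:ℕ) + 1 : ℕ):ℝ) ≤ |w i| := by push_cast; linarith
      have h3 := Nat.le_floor h2
      omega
    · intro p hp q hq hpq
      simp only [Finset.coe_filter, Set.mem_setOf_eq] at hp hq
      rcases p with ⟨pi, pa⟩
      rcases q with ⟨qi, qa⟩
      have hpi : pi = i := hp.2
      have hqi : qi = i := hq.2
      subst hpi
      subst hqi
      simp only at hpq
      congr
      exact Fin.ext hpq
  have hκker : ∀ j, ∑ i, W j i * κ i = 0 := by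
    intro j
    have hstep : ∀ i : Fin n, ((W j i * κ i : ℤ) : ℝ) = ∑ p ∈ T.filter (fun p => p.1 = i), v p j := by
      intro i
      have hc : ∀ p ∈ T.filter (fun p => p.1 = i), v p j = ((sgz i * W j i : ℤ) : ℝ) := by
        intro p hp
        rw [Finset.mem_filter] at hp
        rw [hvint p j (hTint p hp.1), hp.2]
      rw [Finset.sum_congr rfl hc, Finset.sum_const, nsmul_eq_mul, hκdef]
      push_cast
      ring
    have hcast : ((∑ i, W j i * κ i : ℤ) : ℝ) = 0 := by
      rw [Int.cast_sum, Finset.sum_congr rfl (fun i _ => hstep i),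
        Finset.sum_fiberwise_of_maps_to (fun p _ => Finset.mem_univ p.1) (fun p => v p j)]
      exact hTsum j
    exact_mod_cast hcast
  have hκsum : 1 ≤ ∑ i, (κ i).natAbs := by
    have h1 : ∑ i, (κ i).natAbs = T.card := by
      rw [Finset.sum_congr rfl (fun i _ => hκabs i)]
      exact (Finset.card_eq_sum_card_fiberwise (fun p _ => Finset.mem_univ p.1)).symm
    rw [h1]
    exact hTne.card_pos
  refine ⟨κ, hκker, hκsum, ?_⟩
  intro i
  have hle : ((κ i).natAbs : ℝ) ≤ |w i| := by
    rw [hκabs i]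
    calc ((T.filter (fun p => p.1 = i)).card : ℝ) ≤ (⌊|w i|⌋₊ : ℝ) := by exact_mod_cast hfib i
    _ ≤ |w i| := Nat.floor_le (habs i)
  refine ⟨hle, ?_⟩
  by_cases h : 0 ≤ w i
  · have hκi : (κ i : ℝ) = ((κ i).natAbs : ℝ) := by
      rw [hκabs i, hκdef]
      dsimp only
      simp [hsgzdef, h]
    rw [hκi]
    rw [abs_of_nonneg h] at hle ⊢
    rw [abs_of_nonneg (by linarith : (0:ℝ) ≤ w i - ((κ i).natAbs : ℝ))]
  · push_neg at h
    have hκi : (κ i : ℝ) = -((κ i).natAbs : ℝ) := by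
      rw [hκabs i, hκdef]
      dsimp only
      simp [hsgzdef, not_le.mpr h]
    rw [hκi]
    rw [abs_of_neg h] at hle ⊢
    have heq2 : w i - -((κ i).natAbs : ℝ) = -(-w i - ((κ i).natAbs : ℝ)) := by ring
    rw [heq2, abs_neg, abs_of_nonneg (by linarith : (0:ℝ) ≤ -w i - ((κ i).natAbs : ℝ))]

end Chunk


open scoped Classical in
lemma decomp {m n Δn : ℕ} {W : Matrix (Fin m) (Fin n) ℤ} (hm : 1 ≤ m)
    (hW : ∀ j i, |W j i| ≤ (Δn : ℤ)) :
    ∀ (Nv : ℕ) (w : Fin n → ℝ), (∀ j, ∑ i, (W j i : ℝ) * w i = 0) →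
    (Finset.univ.filter (fun i : Fin n => ¬∃ z : ℤ, (z : ℝ) = w i)).card ≤ m →
    (∑ i, ⌈|w i|⌉₊ = Nv) →
    ∃ u : Fin n → ℤ, (∀ j, ∑ i, W j i * u i = 0) ∧
      ∀ i, |w i - (u i : ℝ)| ≤ ((m * (2*m*Δn + 1)^m : ℕ) : ℝ) := by
  intro Nv
  induction Nv using Nat.strong_induction_on with
  | _ Nv IH =>
    intro w hker hfrac hNv
    by_cases hle : Nv ≤ m * (2*m*Δn + 1)^m
    · refine ⟨fun _ => 0, by simp, ?_⟩
      intro i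
      have h1 : |w i - ((0:ℤ) : ℝ)| = |w i| := by simp
      rw [h1]
      have h2 : ⌈|w i|⌉₊ ≤ Nv := by
        rw [← hNv]
        exact Finset.single_le_sum (f := fun i => ⌈|w i|⌉₊)
          (fun i _ => Nat.zero_le _) (Finset.mem_univ i)
      calc |w i| ≤ (⌈|w i|⌉₊ : ℝ) := Nat.le_ceil _
        _ ≤ ((m * (2*m*Δn+1)^m : ℕ) : ℝ) := by exact_mod_cast le_trans h2 hle
    · push_neg at hle
      obtain ⟨κ, hκker, hκ1, hκprop⟩ := exists_chunk hm hW w hker hfrac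
        (by rw [hNv]; exact hle)
      set w' : Fin n → ℝ := fun i => w i - κ i with hw'def
      have hker' : ∀ j, ∑ i, (W j i :ℝ) * w' i = 0 := by
        intro j
        simp only [hw'def]
        have h1 : ∀ i, (W j i:ℝ) * (w i - κ i)
            = (W j i:ℝ) * w i - ((W j i * κ i : ℤ):ℝ) := by
          intro i; push_cast; ring
        rw [Finset.sum_congr rfl (fun i _ => h1 i), Finset.sum_sub_distrib, hker j,
          ← Int.cast_sum, hκker j]
        simp
      have hfrac' : (Finset.univ.filter (fun i : Fin n => ¬∃ z : ℤ, (z : ℝ) = w' i)).card ≤ m := by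
        apply le_trans (Finset.card_le_card ?_) hfrac
        intro i hi
        simp only [Finset.mem_filter, Finset.mem_univ, true_and] at hi ⊢
        intro hz
        obtain ⟨z, hz⟩ := hz
        exact hi ⟨z - κ i, by push_cast; rw [hz]⟩
      have hceil' : ∀ i, ⌈|w' i|⌉₊ + (κ i).natAbs = ⌈|w i|⌉₊ := by
        intro i
        have h2 := (hκprop i).2
        have h3 : |w' i| = |w i| - ((κ i).natAbs : ℝ) := h2
        have h4 : |w' i| + ((κ i).natAbs:ℝ) = |w i| := by rw [h3]; ring
        rw [← h4, Nat.ceil_add_natCast (abs_nonneg _)]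
      have hsumsplit : ∑ i, ⌈|w' i|⌉₊ + ∑ i, (κ i).natAbs = Nv := by
        rw [← Finset.sum_add_distrib, Finset.sum_congr rfl (fun i _ => hceil' i), hNv]
      have hlt : Nv - ∑ i, (κ i).natAbs < Nv := by omega
      obtain ⟨u', hu'ker, hu'bound⟩ := IH _ hlt w' hker' hfrac' (by omega)
      refine ⟨fun i => κ i + u' i, ?_, ?_⟩
      · intro j
        have h1 : ∀ i, W j i * (κ i + u' i) = W j i * κ i + W j i * u' i := fun i => by ring
        rw [Finset.sum_congr rfl (fun i _ => h1 i), Finset.sum_add_distrib, hκker j, hu'ker j]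
        simp
      · intro i
        have h1 : w i - ((κ i + u' i : ℤ):ℝ) = w' i - u' i := by
          simp only [hw'def]; push_cast; ring
        rw [h1]
        exact hu'bound i


open scoped Classical in
lemma vertex_reduce {m n : ℕ} {W : Matrix (Fin m) (Fin n) ℤ} (t : ℤ)
    (bR : Fin m → ℝ)
    (lam : Fin n → ℝ) (hlam : ∀ i, (t:ℝ) ≤ lam i)
    (hWlam : ∀ j, ∑ i, (W j i : ℝ) * lam i = bR j) :
    ∃ mu : Fin n → ℝ, (∀ i, (t:ℝ) ≤ mu i) ∧ (∀ j, ∑ i, (W j i:ℝ) * mu i = bR j) ∧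
      (Finset.univ.filter (fun i : Fin n => ¬∃ z : ℤ, (z:ℝ) = mu i)).card ≤ m := by
  suffices H : ∀ (c : ℕ) (mu : Fin n → ℝ), (∀ i, (t:ℝ) ≤ mu i) →
      (∀ j, ∑ i, (W j i:ℝ) * mu i = bR j) →
      ((Finset.univ.filter (fun i : Fin n => mu i ≠ (t:ℝ))).card = c) →
      ∃ nu : Fin n → ℝ, (∀ i, (t:ℝ) ≤ nu i) ∧ (∀ j, ∑ i, (W j i:ℝ) * nu i = bR j) ∧
        (Finset.univ.filter (fun i : Fin n => ¬∃ z : ℤ, (z:ℝ) = nu i)).card ≤ m by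
    exact H _ lam hlam hWlam rfl
  intro c
  induction c using Nat.strong_induction_on with
  | _ c IH =>
    intro mu hge hWmu hc
    set S := Finset.univ.filter (fun i : Fin n => mu i ≠ (t:ℝ)) with hSdef
    by_cases hind : LinearIndependent ℝ (fun i : {x // x ∈ S} => (fun j => (W j (i:Fin n) : ℝ)))
    · have hcard : S.card ≤ m := by
        have h1 := hind.fintype_card_le_finrank
        simp only [Module.finrank_pi, Fintype.card_fin, Fintype.card_coe] at h1
        exact h1
      refine ⟨mu, hge, hWmu, le_trans (Finset.card_le_card ?_) hcard⟩
      intro i hi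
      simp only [Finset.mem_filter, Finset.mem_univ, true_and] at hi
      rw [hSdef, Finset.mem_filter]
      refine ⟨Finset.mem_univ i, ?_⟩
      intro he
      exact hi ⟨t, he.symm⟩
    · rw [Fintype.not_linearIndependent_iff] at hind
      obtain ⟨g, hg0, i₂, hgne⟩ := hind
      set γ0 : Fin n → ℝ := fun i => if h : i ∈ S then g ⟨i,h⟩ else 0 with hγ0def
      have hγ0supp : ∀ i, γ0 i ≠ 0 → i ∈ S := by
        intro i hne
        by_contra hiS
        simp [hγ0def, hiS] at hne
      have hγ0ker : ∀ j, ∑ i, (W j i:ℝ) * γ0 i = 0 := by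
        intro j
        have h1 : ∑ i, (W j i:ℝ) * γ0 i = ∑ i ∈ S, (W j i:ℝ) * γ0 i := by
          rw [← Finset.sum_subset (Finset.subset_univ S)]
          intro x _ hx
          have : γ0 x = 0 := by
            by_contra hne
            exact hx (hγ0supp x hne)
          simp [this]
        have h2 : ∑ i ∈ S, (W j i:ℝ) * γ0 i = ∑ i : {x // x ∈ S}, g i * (W j (i : Fin n) : ℝ) := by
          rw [← Finset.sum_attach S (fun i => (W j i:ℝ) * γ0 i)]
          apply Finset.sum_congr rfl
          intro i _
          simp [hγ0def, i.2]
          ring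
        have h3 := congrFun hg0 j
        simp only [Finset.sum_apply, Pi.smul_apply, smul_eq_mul, Pi.zero_apply] at h3
        rw [h1, h2]
        exact h3
      have hγ0ne : γ0 (i₂ : Fin n) ≠ 0 := by
        have : γ0 (i₂ : Fin n) = g i₂ := by simp [hγ0def, i₂.2]
        rw [this]
        exact hgne
      -- choose a direction with a positive coordinate
      have hdir : ∃ γ : Fin n → ℝ, (∀ i, γ i ≠ 0 → i ∈ S) ∧ (∀ j, ∑ i, (W j i:ℝ) * γ i = 0) ∧
          ∃ i, 0 < γ i := by
        rcases lt_or_gt_of_ne hγ0ne with hneg | hpos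
        · refine ⟨fun i => -γ0 i, ?_, ?_, ⟨i₂, by simpa using hneg⟩⟩
          · intro i hne
            apply hγ0supp
            simpa using hne
          · intro j
            have h1 : ∀ i, (W j i:ℝ) * (-γ0 i) = -((W j i:ℝ) * γ0 i) := fun i => by ring
            rw [Finset.sum_congr rfl (fun i _ => h1 i), Finset.sum_neg_distrib, hγ0ker j, neg_zero]
        · exact ⟨γ0, hγ0supp, hγ0ker, ⟨i₂, hpos⟩⟩
      obtain ⟨γ, hγsupp, hγker, i₁, hi₁⟩ := hdir
      -- move down along γ until a coordinate hits t
      set D := Finset.univ.filter (fun i => 0 < γ i) with hDdef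
      have hDne : D.Nonempty := ⟨i₁, by simp [hDdef, hi₁]⟩
      have hDgt : ∀ i ∈ D, (t:ℝ) < mu i := by
        intro i hi
        rw [hDdef, Finset.mem_filter] at hi
        have hiS : i ∈ S := hγsupp i (ne_of_gt hi.2)
        rw [hSdef, Finset.mem_filter] at hiS
        exact lt_of_le_of_ne (hge i) (Ne.symm hiS.2)
      set r : Fin n → ℝ := fun i => (mu i - t) / γ i with hrdef
      have hrpos : ∀ i ∈ D, 0 < r i := by
        intro i hi
        rw [hDdef, Finset.mem_filter] at hi
        exact div_pos (by linarith [hDgt i (by rw [hDdef, Finset.mem_filter]; exact hi)]) hi.2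
      set cst := D.inf' hDne r with hcstdef
      have hcstpos : 0 < cst := by
        rw [hcstdef, Finset.lt_inf'_iff]
        exact hrpos
      obtain ⟨i₀, hi₀D, hi₀⟩ := Finset.exists_mem_eq_inf' hDne r
      have hγi₀ : 0 < γ i₀ := by
        rw [hDdef, Finset.mem_filter] at hi₀D
        exact hi₀D.2
      set nu : Fin n → ℝ := fun i => mu i - cst * γ i with hnudef
      have hnuge : ∀ i, (t:ℝ) ≤ nu i := by
        intro i
        simp only [hnudef]
        rcases lt_trichotomy (γ i) 0 with h | h | h
        · nlinarith [hge i, hcstpos]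
        · rw [h]; simpa using hge i
        · have hiD : i ∈ D := by rw [hDdef, Finset.mem_filter]; exact ⟨Finset.mem_univ i, h⟩
          have h1 : cst ≤ r i := Finset.inf'_le r hiD
          have h2 : cst * γ i ≤ r i * γ i := by nlinarith
          have h3 : r i * γ i = mu i - t := by
            rw [hrdef]
            field_simp
          linarith
      have hnuW : ∀ j, ∑ i, (W j i:ℝ) * nu i = bR j := by
        intro j
        simp only [hnudef]
        have h1 : ∀ i, (W j i:ℝ) * (mu i - cst * γ i)
            = (W j i:ℝ) * mu i - cst * ((W j i:ℝ) * γ i) := fun i => by ring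
        rw [Finset.sum_congr rfl (fun i _ => h1 i), Finset.sum_sub_distrib, hWmu j,
          ← Finset.mul_sum, hγker j, mul_zero, sub_zero]
      have hnu₀ : nu i₀ = (t:ℝ) := by
        simp only [hnudef]
        rw [hcstdef, hi₀, hrdef]
        field_simp
        ring
      have hsub : Finset.univ.filter (fun i : Fin n => nu i ≠ (t:ℝ)) ⊆ S.erase i₀ := by
        intro i hi
        simp only [Finset.mem_filter, Finset.mem_univ, true_and] at hi
        refine Finset.mem_erase.mpr ⟨?_, ?_⟩
        · intro he
          rw [he] at hi
          exact hi hnu₀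
        · by_contra hiS
          have hγ0 : γ i = 0 := by
            by_contra hne
            exact hiS (hγsupp i hne)
          apply hi
          simp only [hnudef]
          rw [hγ0, mul_zero, sub_zero]
          by_contra hne
          exact hiS (by rw [hSdef, Finset.mem_filter]; exact ⟨Finset.mem_univ i, hne⟩)
      have hi₀S : i₀ ∈ S := by
        apply hγsupp
        exact ne_of_gt hγi₀
      have hlt : (Finset.univ.filter (fun i : Fin n => nu i ≠ (t:ℝ))).card < c := by
        calc (Finset.univ.filter (fun i : Fin n => nu i ≠ (t:ℝ))).card
            ≤ (S.erase i₀).card := Finset.card_le_card hsub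
          _ < S.card := by
              rw [Finset.card_erase_of_mem hi₀S]
              have : 0 < S.card := Finset.card_pos.mpr ⟨i₀, hi₀S⟩
              omega
          _ = c := hc
      exact IH _ hlt nu hnuge hnuW rfl



/-- Theorem on the diagonal Frobenius number: if `cone(W)` is pointed and
`b ∈ Λ(W)` can be written as `Wλ` with all coordinates of `λ` at least
`m·(2mΔ+1)^m`, then `b ∈ intcone(W)`. -/
theorem diagonal_frobenius_bound (m n : ℕ) (Δ : ℤ)
    (W : Matrix (Fin m) (Fin n) ℤ) (hΔ : ∀ i j, |W i j| ≤ Δ)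
    -- `cone(W)` is pointed: it contains no line, i.e. `cone(W) ∩ (−cone(W)) = {0}`
    (hpointed : ∀ v : Fin m → ℝ,
      (∃ x : Fin n → ℝ, 0 ≤ x ∧ (W.map (Int.cast : ℤ → ℝ)).mulVec x = v) →
      (∃ x : Fin n → ℝ, 0 ≤ x ∧ (W.map (Int.cast : ℤ → ℝ)).mulVec x = -v) →
      v = 0)
    (b : Fin m → ℤ)
    -- `b ∈ Λ(W)`
    (hlat : ∃ y : Fin n → ℤ, W.mulVec y = b)
    -- `b = Wλ` with `λᵢ ≥ m·(2mΔ+1)^m` for all `i`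
    (lam : Fin n → ℝ)
    (hlam : ∀ i, (m : ℝ) * (2 * (m : ℝ) * (Δ : ℝ) + 1) ^ m ≤ lam i)
    (hWlam : (W.map (Int.cast : ℤ → ℝ)).mulVec lam = fun i => (b i : ℝ)) :
    -- then `b ∈ intcone(W)`
    ∃ x : Fin n → ℤ, 0 ≤ x ∧ W.mulVec x = b := by
  classical
  obtain ⟨y, hy⟩ := hlat
  rcases Nat.eq_zero_or_pos m with hm0 | hm
  · subst hm0
    refine ⟨fun _ => 0, le_refl _, ?_⟩
    funext j
    exact j.elim0
  rcases Nat.eq_zero_or_pos n with hn0 | hn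
  · subst hn0
    refine ⟨y, ?_, hy⟩
    intro i
    exact i.elim0
  have hΔ0 : 0 ≤ Δ := le_trans (abs_nonneg _) (hΔ ⟨0, hm⟩ ⟨0, hn⟩)
  set Δn : ℕ := Δ.toNat with hΔndef
  have hΔcast : (Δn : ℤ) = Δ := Int.toNat_of_nonneg hΔ0
  have hW' : ∀ j i, |W j i| ≤ (Δn:ℤ) := by
    intro j i
    rw [hΔcast]
    exact hΔ j i
  have hΔR : ((Δn:ℕ):ℝ) = (Δ:ℝ) := by rw [← hΔcast]; simp
  have htcast : ((m * (2*m*Δn + 1)^m : ℕ) : ℝ) = (m:ℝ) * (2*(m:ℝ)*(Δ:ℝ)+1)^m := by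
    push_cast
    rw [hΔR]
  have hWlam' : ∀ j, ∑ i, (W j i:ℝ) * lam i = ((b j : ℤ):ℝ) := by
    intro j
    have h1 := congrFun hWlam j
    simpa [Matrix.mulVec, dotProduct, Matrix.map_apply] using h1
  have hy' : ∀ j, ∑ i, W j i * y i = b j := by
    intro j
    have h1 := congrFun hy j
    simpa [Matrix.mulVec, dotProduct] using h1
  obtain ⟨mu, hmuge, hmuW, hmufrac⟩ := vertex_reduce (W := W)
    ((m * (2*m*Δn + 1)^m : ℕ) : ℤ) (fun j => ((b j : ℤ):ℝ)) lam
    (by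
      intro i
      have h1 : (((m * (2*m*Δn + 1)^m : ℕ) : ℤ):ℝ) = ((m * (2*m*Δn + 1)^m : ℕ) : ℝ) := by
        push_cast
        ring
      rw [h1, htcast]
      exact hlam i)
    hWlam'
  set w : Fin n → ℝ := fun i => mu i - (y i : ℝ) with hwdef
  have hker : ∀ j, ∑ i, (W j i:ℝ) * w i = 0 := by
    intro j
    simp only [hwdef]
    have h1 : ∀ i, (W j i:ℝ)*(mu i - (y i:ℝ)) = (W j i:ℝ)*mu i - ((W j i * y i : ℤ):ℝ) := by
      intro i
      push_cast
      ring
    rw [Finset.sum_congr rfl (fun i _ => h1 i), Finset.sum_sub_distrib, hmuW j,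
      ← Int.cast_sum, hy' j, sub_self]
  have hfracw : (Finset.univ.filter (fun i : Fin n => ¬∃ z : ℤ, (z:ℝ) = w i)).card ≤ m := by
    apply le_trans (Finset.card_le_card ?_) hmufrac
    intro i hi
    simp only [Finset.mem_filter, Finset.mem_univ, true_and] at hi ⊢
    intro hz
    obtain ⟨z, hz⟩ := hz
    exact hi ⟨z - y i, by simp only [hwdef]; push_cast; rw [hz]⟩
  obtain ⟨u, huker, hubound⟩ := decomp (Δn := Δn) (W := W) hm hW'
    (∑ i, ⌈|w i|⌉₊) w hker hfracw rfl
  refine ⟨fun i => y i + u i, ?_, ?_⟩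
  · rw [Pi.le_def]
    intro i
    have h2 := hubound i
    have h3 : w i - (u i : ℝ) ≤ ((m * (2*m*Δn + 1)^m : ℕ) : ℝ) :=
      le_trans (le_abs_self _) h2
    have h4 : (((m * (2*m*Δn + 1)^m : ℕ) : ℤ):ℝ) ≤ mu i := hmuge i
    have h5 : (((m * (2*m*Δn + 1)^m : ℕ) : ℤ):ℝ) = ((m * (2*m*Δn + 1)^m : ℕ) : ℝ) := by
      push_cast
      ring
    rw [h5] at h4
    have h1 : (0:ℝ) ≤ ((y i + u i : ℤ):ℝ) := by
      push_cast
      simp only [hwdef] at h3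
      linarith
    have h6 : (0:ℤ) ≤ y i + u i := by exact_mod_cast h1
    simpa using h6
  · funext j
    have h1 : W.mulVec (fun i => y i + u i) j = ∑ i, W j i * (y i + u i) := by
      simp [Matrix.mulVec, dotProduct]
    rw [h1]
    have h2 : ∀ i, W j i * (y i + u i) = W j i * y i + W j i * u i := fun i => by ring
    rw [Finset.sum_congr rfl (fun i _ => h2 i), Finset.sum_add_distrib, hy' j, huker j, add_zero]
end

section
/- Let W be an m×n integer matrix with Λ(W) = ℤ^m and cone(W) pointed, and set t* = ((n − m)·√n / 2)·√(det(W·Wᵀ)). Then for every b ∈ ℤ^m such that b = Wλ for some λ ∈ ℝ^n with λᵢ ≥ t* for every coordinate i, one has b ∈ intcone(W). (In other words, the diagonal Frobenius number of W is at most t*.) -/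
open Matrix

lemma castVec_mulVec {m n : ℕ} (W : Matrix (Fin m) (Fin n) ℤ) (x : Fin n → ℤ) :
    (W.map (Int.cast : ℤ → ℝ)).mulVec (fun j => (x j : ℝ)) = fun i => ((W.mulVec x) i : ℝ) := by
  ext i
  simp only [Matrix.mulVec, dotProduct, Matrix.map_apply]
  push_cast
  rfl


lemma one_le_det_one_add {ι : Type*} [Fintype ι] [DecidableEq ι]
    (C : Matrix ι ι ℝ) (hC : C.PosSemidef) : 1 ≤ (1 + C).det := by
  have h1 : (1 + C).PosSemidef := Matrix.PosSemidef.add Matrix.PosSemidef.one hC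
  have hh := h1.isHermitian
  have hdet : (1 + C).det = ∏ i, hh.eigenvalues i := by
    simpa using hh.det_eq_prod_eigenvalues
  have key : ∀ i, 1 ≤ hh.eigenvalues i := by
    intro i
    have hev := hh.eigenvalues_eq i
    set v : ι → ℝ := ⇑(hh.eigenvectorBasis i) with hv
    have hnorm : dotProduct v v = 1 := by
      have h := hh.eigenvectorBasis.orthonormal.1 i
      have h2 : (inner ℝ (hh.eigenvectorBasis i) (hh.eigenvectorBasis i) : ℝ) = 1 := by
        rw [real_inner_self_eq_norm_mul_norm, h]; ring
      rw [PiLp.inner_apply] at h2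
      simp only [dotProduct, hv, ← sq]
      simpa using h2
    have hpsd := hC.dotProduct_mulVec_nonneg v
    rw [hev]
    simp only [star_trivial] at *
    rw [add_mulVec, one_mulVec, dotProduct_add, hnorm]
    simp only [RCLike.re_to_real]
    linarith
  rw [hdet]
  calc (1:ℝ) = ∏ _i : ι, 1 := by simp
    _ ≤ ∏ i, hh.eigenvalues i :=
      Finset.prod_le_prod (fun _ _ => zero_le_one) (fun i _ => key i)

lemma det_nonneg_of_posSemidef {ι : Type*} [Fintype ι] [DecidableEq ι]
    {A : Matrix ι ι ℝ} (hA : A.PosSemidef) : 0 ≤ A.det := by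
  have hdet : A.det = ∏ i, hA.isHermitian.eigenvalues i := by
    simpa using hA.isHermitian.det_eq_prod_eigenvalues
  rw [hdet]
  exact Finset.prod_nonneg fun i _ => hA.eigenvalues_nonneg i

open scoped MatrixOrder in
lemma det_le_det_add_of_posSemidef {ι : Type*} [Fintype ι] [DecidableEq ι]
    {A B : Matrix ι ι ℝ} (hA : A.PosSemidef) (hB : B.PosSemidef) :
    A.det ≤ (A + B).det := by
  by_cases hd : A.det = 0
  · rw [hd]; exact det_nonneg_of_posSemidef (hA.add hB)
  · set S := CFC.sqrt A with hS
    have hSpsd : S.PosSemidef := Matrix.nonneg_iff_posSemidef.mp (CFC.sqrt_nonneg A)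
    have hSS : S * S = A := CFC.sqrt_mul_sqrt_self A hA.nonneg
    have hdS : S.det * S.det = A.det := by rw [← det_mul, hSS]
    have hdSne : S.det ≠ 0 := fun h => hd (by rw [← hdS, h, zero_mul])
    have hU : IsUnit S.det := hdSne.isUnit
    have hSh : S.IsHermitian := hSpsd.isHermitian
    have hSinvh : (S⁻¹).IsHermitian := hSh.inv
    have hC : (S⁻¹ * B * S⁻¹).PosSemidef := by
      have := hB.mul_mul_conjTranspose_same S⁻¹
      rwa [hSinvh.eq] at this
    have hsplit : A + B = S * (1 + S⁻¹ * B * S⁻¹) * S := by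
      have hmid : S * (S⁻¹ * B * S⁻¹) * S = B := by
        calc S * (S⁻¹ * B * S⁻¹) * S = (S * S⁻¹) * B * (S⁻¹ * S) := by
              simp only [Matrix.mul_assoc]
          _ = B := by rw [mul_nonsing_inv _ hU, nonsing_inv_mul _ hU, one_mul, mul_one]
      rw [mul_add, add_mul, mul_one, hSS, hmid]
    have h1 : 1 ≤ (1 + S⁻¹ * B * S⁻¹).det := one_le_det_one_add _ hC
    calc A.det = S.det * S.det := hdS.symm
      _ ≤ S.det * S.det * (1 + S⁻¹ * B * S⁻¹).det := by
          nlinarith [hdS, det_nonneg_of_posSemidef hA]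
      _ = (A + B).det := by rw [hsplit, det_mul, det_mul]; ring



lemma sq_det_submatrix_le {m n : ℕ} (V : Matrix (Fin m) (Fin n) ℝ)
    (σ : Fin m → Fin n) (hσ : Function.Injective σ) :
    ((V.submatrix id σ).det)^2 ≤ (V * Vᵀ).det := by
  classical
  set P := V.submatrix id σ with hP
  let N : Matrix (Fin m) {j : Fin n // j ∉ Set.range σ} ℝ :=
    V.submatrix id (fun x => (x : Fin n))
  have hbij : Function.Bijective (Sum.elim σ (fun x : {j : Fin n // j ∉ Set.range σ} => (x : Fin n))) := by
    constructor
    · rintro (a | a) (b | b) h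
      · simp only [Sum.elim_inl] at h; exact congrArg Sum.inl (hσ h)
      · exact absurd ⟨a, h⟩ b.2
      · exact absurd ⟨b, h.symm⟩ a.2
      · simp only [Sum.elim_inr] at h; exact congrArg Sum.inr (Subtype.ext h)
    · intro j
      by_cases hj : j ∈ Set.range σ
      · obtain ⟨s, hs⟩ := hj; exact ⟨Sum.inl s, hs⟩
      · exact ⟨Sum.inr ⟨j, hj⟩, rfl⟩
  let e : (Fin m ⊕ {j : Fin n // j ∉ Set.range σ}) ≃ Fin n := Equiv.ofBijective _ hbij
  have hsplit : V * Vᵀ = P * Pᵀ + N * Nᵀ := by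
    ext i j
    simp only [Matrix.add_apply, Matrix.mul_apply, transpose_apply, submatrix_apply, id]
    rw [← Equiv.sum_comp e (fun l => V i l * V j l), Fintype.sum_sum_type]
    rfl
  have hPpsd : (P * Pᵀ).PosSemidef := by
    have := posSemidef_self_mul_conjTranspose P
    rwa [conjTranspose_eq_transpose_of_trivial] at this
  have hNpsd : (N * Nᵀ).PosSemidef := by
    have := posSemidef_self_mul_conjTranspose N
    rwa [conjTranspose_eq_transpose_of_trivial] at this
  calc (P.det)^2 = (P * Pᵀ).det := by rw [det_mul, det_transpose, sq]
    _ ≤ (P * Pᵀ + N * Nᵀ).det := det_le_det_add_of_posSemidef hPpsd hNpsd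
    _ = (V * Vᵀ).det := by rw [← hsplit]


set_option maxHeartbeats 1000000 in
/-- Theorem of Aliev and Henk: if `Λ(W) = ℤ^m` and `cone(W)` is pointed, then the
diagonal Frobenius number of `W` is at most `((n−m)√n/2)·√(det(WWᵀ))`: every
`b ∈ ℤ^m` of the form `Wλ` with all coordinates of `λ` at least this bound lies in
`intcone(W)`. -/
theorem aliev_henk_diagonal_frobenius (m n : ℕ)
    (W : Matrix (Fin m) (Fin n) ℤ)
    -- `Λ(W) = ℤ^m`
    (hlat : ∀ z : Fin m → ℤ, ∃ x : Fin n → ℤ, W.mulVec x = z)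
    -- `cone(W)` is pointed
    (hpointed : ∀ v : Fin m → ℝ,
      (∃ x : Fin n → ℝ, 0 ≤ x ∧ (W.map (Int.cast : ℤ → ℝ)).mulVec x = v) →
      (∃ x : Fin n → ℝ, 0 ≤ x ∧ (W.map (Int.cast : ℤ → ℝ)).mulVec x = -v) →
      v = 0)
    (b : Fin m → ℤ)
    (lam : Fin n → ℝ)
    -- all coordinates of `λ` are at least `t* = ((n−m)√n/2)·√(det(WWᵀ))`
    (hlam : ∀ i,
      ((n : ℝ) - (m : ℝ)) * Real.sqrt (n : ℝ) / 2 *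
        Real.sqrt (((W * Wᵀ).det : ℝ)) ≤ lam i)
    (hWlam : (W.map (Int.cast : ℤ → ℝ)).mulVec lam = fun i => (b i : ℝ)) :
    -- then `b ∈ intcone(W)`
    ∃ x : Fin n → ℤ, 0 ≤ x ∧ W.mulVec x = b := by
  classical
  classical
  obtain ⟨x0, hx0⟩ := hlat b
  set WR := W.map (Int.cast : ℤ → ℝ) with hWRdef
  have hsurj : Function.Surjective WR.mulVecLin := by
    rw [← LinearMap.range_eq_top, eq_top_iff, ← (Pi.basisFun ℝ (Fin m)).span_eq,
      Submodule.span_le]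
    rintro v ⟨i, rfl⟩
    obtain ⟨x, hx⟩ := hlat (Pi.single i 1)
    refine ⟨(fun j => (x j : ℝ)), ?_⟩
    rw [mulVecLin_apply, castVec_mulVec W x, hx]
    ext j
    simp [Pi.single_apply]
  have hrk := LinearMap.finrank_range_add_finrank_ker WR.mulVecLin
  rw [LinearMap.range_eq_top.2 hsurj, finrank_top, Module.finrank_fin_fun,
    Module.finrank_fin_fun] at hrk
  have hmn : m ≤ n := by omega
  have hdk : Module.finrank ℝ (LinearMap.ker WR.mulVecLin) = n - m := by omega
  -- columns
  have hspan : Submodule.span ℝ (Set.range WRᵀ) = ⊤ := by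
    rw [show Set.range WRᵀ = Set.range WR.col from rfl, ← Matrix.range_mulVecLin]; exact LinearMap.range_eq_top.2 hsurj
  obtain ⟨bs, hbsub, hbspan, hbind⟩ := exists_linearIndependent ℝ (Set.range WRᵀ)
  rw [hspan] at hbspan
  haveI : Fintype bs := hbind.setFinite.fintype
  let bb : Module.Basis bs ℝ (Fin m → ℝ) := Module.Basis.mk hbind (by rw [Subtype.range_coe, hbspan])
  have hcard : Fintype.card bs = m := by
    have h1 := Module.finrank_eq_card_basis bb
    rw [Module.finrank_fin_fun] at h1
    exact h1.symm
  choose pre hpre using fun x : bs => hbsub x.2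
  let e0 : Fin m ≃ bs := (Fintype.equivFinOfCardEq hcard).symm
  set σ : Fin m → Fin n := fun k => pre (e0 k) with hσdef
  have hσcol : ∀ k, WRᵀ (σ k) = ↑(e0 k) := fun k => hpre (e0 k)
  have hσ : Function.Injective σ := by
    intro k k' h
    refine e0.injective (Subtype.ext ?_)
    rw [← hσcol k, ← hσcol k', h]
  set A : Matrix (Fin m) (Fin m) ℝ := WR.submatrix id σ with hAdef
  have hAind : LinearIndependent ℝ (fun k => Aᵀ k) := by
    have h : (fun k => Aᵀ k) = fun k => ((e0 k : Fin m → ℝ)) := by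
      funext k; rw [show Aᵀ k = WRᵀ (σ k) from rfl, hσcol]
    rw [h]
    exact hbind.comp e0 e0.injective
  have hAunit : IsUnit A := linearIndependent_cols_iff_isUnit.mp hAind
  have hAdet : A.det ≠ 0 := ((isUnit_iff_isUnit_det A).mp hAunit).ne_zero
  -- integer submatrix
  set Az : Matrix (Fin m) (Fin m) ℤ := W.submatrix id σ with hAzdef
  have hAmap : A = Az.map (Int.cast : ℤ → ℝ) := rfl
  have hAzdet : ((Az.det : ℤ) : ℝ) = A.det := by
    have h := (Int.castRingHom ℝ).map_det Az
    simp only [Int.coe_castRingHom] at h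
    rw [hAmap]; exact h
  have hdetR : ((Az.det : ℤ) : ℝ) ≠ 0 := by rw [hAzdet]; exact hAdet
  -- complement
  have hcardk : Fintype.card {j : Fin n // j ∉ Set.range σ} = n - m := by
    have h1 : Fintype.card {j : Fin n // j ∈ Set.range σ} = m := by
      have h := Set.card_range_of_injective hσ
      rw [Fintype.card_fin] at h
      refine Eq.trans ?_ h
      congr!
    rw [Fintype.card_subtype_compl, h1, Fintype.card_fin]
  let τ0 : Fin (n - m) ≃ {j : Fin n // j ∉ Set.range σ} := (Fintype.equivFinOfCardEq hcardk).symm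
  set τ : Fin (n - m) → Fin n := fun k => (τ0 k : Fin n) with hτdef
  have hτr : ∀ k, τ k ∉ Set.range σ := fun k => (τ0 k).2
  have hτ : Function.Injective τ := fun k k' h => τ0.injective (Subtype.ext h)
  -- kernel vectors
  set wcol : Fin (n - m) → (Fin m → ℤ) := fun k i => W i (τ k) with hwcoldef
  set g : Fin (n - m) → (Fin n → ℤ) := fun k =>
    Pi.single (τ k) Az.det - ∑ s, Pi.single (σ s) (cramer Az (wcol k) s) with hgdef
  have hg_τ : ∀ k k', g k (τ k') = if k' = k then Az.det else 0 := by
    intro k k'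
    have h1 : (∑ s, Pi.single (σ s) (cramer Az (wcol k) s) : Fin n → ℤ) (τ k') = 0 := by
      rw [Finset.sum_apply]
      refine Finset.sum_eq_zero fun s _ => ?_
      rw [Pi.single_apply, if_neg fun h => hτr k' ⟨s, h.symm⟩]
    simp only [hgdef, Pi.sub_apply, h1, sub_zero, Pi.single_apply]
    by_cases h : k' = k
    · rw [h, if_pos rfl, if_pos rfl]
    · rw [if_neg (fun hh => h (hτ hh)), if_neg h]
  have hg_σ : ∀ k s', g k (σ s') = -(cramer Az (wcol k) s') := by
    intro k s'
    have h1 : (Pi.single (τ k) Az.det : Fin n → ℤ) (σ s') = 0 := by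
      rw [Pi.single_apply, if_neg fun h => hτr k ⟨s', h⟩]
    have h2 : (∑ s, Pi.single (σ s) (cramer Az (wcol k) s) : Fin n → ℤ) (σ s')
        = cramer Az (wcol k) s' := by
      rw [Finset.sum_apply]
      rw [Finset.sum_eq_single s']
      · rw [Pi.single_apply, if_pos rfl]
      · intro s _ hs
        rw [Pi.single_apply, if_neg fun h => hs (hσ h.symm)]
      · intro h; exact absurd (Finset.mem_univ s') h
    simp only [hgdef, Pi.sub_apply, h1, h2, zero_sub]
  have hg_other : ∀ k j, j ∉ Set.range σ → j ≠ τ k → g k j = 0 := by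
    intro k j hj1 hj2
    have h1 : (Pi.single (τ k) Az.det : Fin n → ℤ) j = 0 := by
      rw [Pi.single_apply, if_neg hj2]
    have h2 : (∑ s, Pi.single (σ s) (cramer Az (wcol k) s) : Fin n → ℤ) j = 0 := by
      rw [Finset.sum_apply]
      refine Finset.sum_eq_zero fun s _ => ?_
      rw [Pi.single_apply, if_neg fun h => hj1 ⟨s, h.symm⟩]
    simp only [hgdef, Pi.sub_apply, h1, h2, sub_zero]
  have hWg : ∀ k, W.mulVec (g k) = 0 := by
    intro k
    have hcr := mulVec_cramer Az (wcol k)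
    ext i
    rw [show W.mulVec (g k) = W.mulVecLin (g k) from rfl, hgdef]
    simp only [map_sub, map_sum, mulVecLin_apply, mulVec_single, Pi.sub_apply,
      Finset.sum_apply, Pi.zero_apply, Pi.smul_apply, op_smul_eq_mul, col_apply, hwcoldef]
    have h4 := congrFun hcr i
    simp only [Matrix.mulVec, dotProduct, Pi.smul_apply, smul_eq_mul] at h4
    have h5 : ∀ s, Az i s = W i (σ s) := fun s => rfl
    simp only [h5, hwcoldef] at h4
    rw [h4]
    ring
  -- real kernel vectors
  set gR : Fin (n - m) → (Fin n → ℝ) := fun k j => ((g k j : ℤ) : ℝ) with hgRdef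
  have hWRg : ∀ k, WR.mulVec (gR k) = 0 := by
    intro k
    rw [hWRdef]
    rw [castVec_mulVec W (g k), hWg k]
    ext i; simp
  have hgind : LinearIndependent ℝ gR := by
    rw [Fintype.linearIndependent_iff]
    intro cc hcc k
    have h1 := congrFun hcc (τ k)
    simp only [Finset.sum_apply, Pi.smul_apply, smul_eq_mul, Pi.zero_apply] at h1
    have h2 : ∀ k', gR k' (τ k) = if k = k' then ((Az.det : ℤ) : ℝ) else 0 := by
      intro k'
      rw [hgRdef]
      simp only [hg_τ k' k]
      split <;> simp
    rw [Finset.sum_congr rfl (fun k' _ => by rw [h2 k'])] at h1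
    simp only [mul_ite, mul_zero] at h1
    rw [Finset.sum_ite_eq (Finset.univ : Finset (Fin (n - m))) k (fun k' => cc k' * ((Az.det : ℤ):ℝ))] at h1
    simp only [Finset.mem_univ, if_true] at h1
    exact (mul_eq_zero.mp h1).resolve_right hdetR
  set K := LinearMap.ker WR.mulVecLin with hKdef
  have hgker : ∀ k, gR k ∈ K := by
    intro k
    rw [hKdef, LinearMap.mem_ker, mulVecLin_apply, hWRg k]
  set G : Fin (n - m) → K := fun k => ⟨gR k, hgker k⟩ with hGdef
  have hGind : LinearIndependent ℝ G := by
    apply LinearIndependent.of_comp K.subtype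
    exact hgind
  have hGspan : Submodule.span ℝ (Set.range G) = ⊤ :=
    hGind.span_eq_top_of_card_eq_finrank' (by rw [Fintype.card_fin, hdk])
  -- representation of x0 - lam in the kernel basis
  set x0R : Fin n → ℝ := fun j => (x0 j : ℝ) with hx0Rdef
  have hmem : x0R - lam ∈ K := by
    rw [hKdef, LinearMap.mem_ker, mulVecLin_apply, Matrix.mulVec_sub]
    rw [show WR.mulVec x0R = fun i => ((W.mulVec x0) i : ℝ) from castVec_mulVec W x0, hx0, hWlam]
    ext i; simp
  have hx0mem : (⟨x0R - lam, hmem⟩ : K) ∈ Submodule.span ℝ (Set.range G) := by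
    rw [hGspan]; trivial
  obtain ⟨c, hc⟩ := (Submodule.mem_span_range_iff_exists_fun ℝ).mp hx0mem
  have hc' : ∑ k, c k • gR k = x0R - lam := by
    have h := congrArg (Subtype.val) hc
    simpa using h
  -- entry bounds
  set D := Real.sqrt (((W * Wᵀ).det : ℝ)) with hDdef
  have hDnn : 0 ≤ D := Real.sqrt_nonneg _
  have hminor : ∀ (ι' : Fin m → Fin n), Function.Injective ι' →
      |((W.submatrix id ι').det : ℝ)| ≤ D := by
    intro ι' hι'
    have h1 : ((WR.submatrix id ι').det)^2 ≤ (WR * WRᵀ).det := sq_det_submatrix_le WR ι' hι'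
    have h2 : (WR.submatrix id ι').det = ((W.submatrix id ι').det : ℝ) := by
      have h := (Int.castRingHom ℝ).map_det (W.submatrix id ι')
      simp only [Int.coe_castRingHom] at h
      exact h.symm
    have h3 : (WR * WRᵀ).det = (((W * Wᵀ).det : ℤ) : ℝ) := by
      have h := (Int.castRingHom ℝ).map_det (W * Wᵀ)
      simp only [Int.coe_castRingHom] at h
      rw [h]
      congr 1
      ext i j
      simp only [RingHom.mapMatrix_apply, Matrix.map_apply, Matrix.mul_apply,
        Matrix.transpose_apply, hWRdef, Int.coe_castRingHom]
      push_cast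
      rfl
    rw [hDdef, ← Real.sqrt_sq_eq_abs]
    apply Real.sqrt_le_sqrt
    rw [← h2, ← h3]
    exact h1
  have hbound : ∀ k j, |gR k j| ≤ D := by
    intro k j
    by_cases hj1 : j = τ k
    · subst hj1
      have hval : gR k (τ k) = ((Az.det : ℤ) : ℝ) := by
        rw [hgRdef]; simp [hg_τ k k]
      rw [hval, hAzdef]
      exact hminor σ hσ
    · by_cases hj2 : j ∈ Set.range σ
      · obtain ⟨s, rfl⟩ := hj2
        have hval : gR k (σ s) = -((cramer Az (wcol k) s : ℤ) : ℝ) := by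
          rw [hgRdef]; simp [hg_σ k s]
        rw [hval, abs_neg]
        have hupd : Az.updateCol s (wcol k) = W.submatrix id (Function.update σ s (τ k)) := by
          ext i s'
          by_cases h : s' = s
          · subst h
            simp [Matrix.updateCol_apply, Function.update_apply, hwcoldef, hAzdef]
          · simp [Matrix.updateCol_apply, Function.update_apply, h, hAzdef]
        have hinj : Function.Injective (Function.update σ s (τ k)) := by
          intro a b' hab
          by_cases ha : a = s <;> by_cases hb : b' = s
          · rw [ha, hb]
          · rw [Function.update_apply, if_pos ha, Function.update_apply, if_neg hb] at hab
            exact absurd ⟨b', hab.symm⟩ (hτr k)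
          · rw [Function.update_apply, if_neg ha, Function.update_apply, if_pos hb] at hab
            exact absurd ⟨a, hab⟩ (hτr k)
          · rw [Function.update_apply, if_neg ha, Function.update_apply, if_neg hb] at hab
            exact hσ hab
        rw [cramer_apply, hupd]
        exact hminor _ hinj
      · have hval : gR k j = 0 := by
          rw [hgRdef]; simp [hg_other k j hj2 hj1]
        rw [hval]
        simpa using hDnn
  -- the integral solution
  set r : Fin (n - m) → ℤ := fun k => round (c k) with hrdef
  set z : Fin n → ℤ := fun j => x0 j - ∑ k, r k * g k j with hzdef
  have hWz : W.mulVec z = b := by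
    have hzeq : z = x0 - ∑ k, r k • g k := by
      ext j
      simp [hzdef, Finset.sum_apply]
    rw [show W.mulVec z = W.mulVecLin z from rfl, hzeq, map_sub, map_sum]
    have h0 : ∀ k, W.mulVecLin (r k • g k) = 0 := fun k => by
      rw [LinearMap.map_smul, mulVecLin_apply]
      rw [show W *ᵥ g k = 0 from hWg k, smul_zero]
    rw [Finset.sum_congr rfl (fun k _ => h0 k)]
    simp only [Finset.sum_const_zero, sub_zero, mulVecLin_apply, hx0]
  refine ⟨z, ?_, hWz⟩
  rw [Pi.le_def]
  intro j
  have hzj : (z j : ℝ) = x0R j - ∑ k, (r k : ℝ) * gR k j := by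
    simp only [hzdef]
    push_cast
    rfl
  have hcj : (∑ k, c k * gR k j) = x0R j - lam j := by
    have h := congrFun hc' j
    simpa [Finset.sum_apply] using h
  have hkey : (z j : ℝ) - lam j = ∑ k, (c k - r k) * gR k j := by
    have hsp : ∑ k, (c k - r k) * gR k j
        = (∑ k, c k * gR k j) - ∑ k, (r k : ℝ) * gR k j := by
      rw [← Finset.sum_sub_distrib]
      exact Finset.sum_congr rfl fun k _ => by ring
    rw [hsp, hcj, hzj]
    ring
  have habs : |(z j : ℝ) - lam j| ≤ ((n - m : ℕ) : ℝ) * (D / 2) := by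
    rw [hkey]
    calc |∑ k, (c k - r k) * gR k j| ≤ ∑ k, |(c k - r k) * gR k j| :=
          Finset.abs_sum_le_sum_abs _ _
      _ ≤ ∑ _k : Fin (n - m), (1/2) * D := by
          refine Finset.sum_le_sum fun k _ => ?_
          rw [abs_mul]
          exact mul_le_mul (abs_sub_round (c k)) (hbound k j) (abs_nonneg _) (by norm_num)
      _ = ((n - m : ℕ) : ℝ) * (D / 2) := by
          rw [Finset.sum_const, Finset.card_univ, Fintype.card_fin, nsmul_eq_mul]
          ring
  have hcastnm : ((n : ℝ) - (m : ℝ)) = ((n - m : ℕ) : ℝ) := by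
    rw [Nat.cast_sub hmn]
  have htd : ((n - m : ℕ) : ℝ) * (D / 2) ≤ ((n : ℝ) - (m : ℝ)) * Real.sqrt (n : ℝ) / 2 * D := by
    rw [hcastnm]
    rcases Nat.eq_zero_or_pos (n - m) with h0 | hpos
    · simp [h0]
    · have hn1 : (1 : ℝ) ≤ Real.sqrt (n : ℝ) := by
        rw [show (1:ℝ) = Real.sqrt 1 from Real.sqrt_one.symm]
        apply Real.sqrt_le_sqrt
        have h1n : 1 ≤ n := by omega
        exact_mod_cast h1n
      have hd0 : (0 : ℝ) ≤ ((n - m : ℕ) : ℝ) := Nat.cast_nonneg _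
      nlinarith [mul_nonneg (mul_nonneg hd0 hDnn) (sub_nonneg.mpr hn1), hDnn]
  have hlamj := hlam j
  have hz0 : (0 : ℝ) ≤ (z j : ℝ) := by
    have h1 := (abs_le.mp habs).1
    linarith
  exact_mod_cast hz0
end
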